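/- Let f : {0,1}^n → {0,1}^n be an AND-NOT network with wiring diagram W, and suppose W contains a path of positive edges k→i_1→⋯→i_r→t (with r ≥ 1) from vertex k to vertex t, and that W contains neither the positive edge (k,t,+) nor the negative edge (k,t,−). Let g be the AND-NOT network whose wiring diagram is W together with the additional positive edge (k,t,+) (so g_i = f_i for i ≠ t and g_t = f_t ∧ x_k). Then f and g have exactly the same steady states. -/

import Mathlib

/-- The AND-NOT network determined by its wiring diagram: node `i` has positive
regulators `P i` and negative regulators `N i`, and coordinate function
`f_i(x) = ⋀_{j∈P i} x j ∧ ⋀_{j∈N i} ¬ x j`. -/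
private lemma reach_aux {n : ℕ} (P : Fin n → Finset (Fin n)) (x : Fin n → Bool) (t : Fin n)
    (hφ : ∀ b, x b = true → ∀ j ∈ P b, x j = true)
    (hφt : ∀ j ∈ P t, x j = true) :
    ∀ a, Relation.TransGen (fun a b : Fin n => a ∈ P b) a t → x a = true := by
  intro a h
  induction h using Relation.TransGen.head_induction_on with
  | single hab => exact hφt _ hab
  | head hab _ ihb => exact hφ _ ihb _ hab

def andNotNet {n : ℕ} (P N : Fin n → Finset (Fin n)) :
    (Fin n → Bool) → Fin n → Bool :=
  fun x i => decide ((∀ j ∈ P i, x j = true) ∧ (∀ j ∈ N i, x j = false))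

/-- If the wiring diagram of an AND-NOT network `f` contains a path of positive edges
`k → i_1 → ⋯ → i_r → t` with `r ≥ 1`, and contains neither the edge `(k,t,+)` nor
`(k,t,−)`, then the AND-NOT network `g` obtained by adding the positive edge
`(k,t,+)` (so `g_i = f_i` for `i ≠ t` and `g_t = f_t ∧ x_k`) has exactly the same
steady states as `f`. -/
theorem andNot_addPosEdge_same_steadyStates {n : ℕ}
    (P N : Fin n → Finset (Fin n)) (hd : ∀ i, Disjoint (P i) (N i))
    (k t : Fin n)
    (hpath : ∃ i1 : Fin n, k ∈ P i1 ∧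
      Relation.TransGen (fun a b : Fin n => a ∈ P b) i1 t)
    (hkP : k ∉ P t) (hkN : k ∉ N t) :
    ∀ x : Fin n → Bool,
      andNotNet P N x = x ↔
      (fun i => if i = t then (andNotNet P N x t && x k) else andNotNet P N x i)
        = x := by
  obtain ⟨i1, hk1, htg⟩ := hpath
  intro x
  constructor
  · intro hfx
    have hF : ∀ b, andNotNet P N x b = x b := fun b => congrFun hfx b
    have hφ : ∀ b, x b = true → ∀ j ∈ P b, x j = true := by
      intro b hb j hj
      exact (of_decide_eq_true ((hF b).trans hb)).1 j hj
    funext i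
    by_cases hi : i = t
    · subst hi
      cases hxt : x i with
      | false => simp [hF i, hxt]
      | true =>
        have hxi1 : x i1 = true := reach_aux P x i hφ (hφ i hxt) i1 htg
        simp [hF i, hxt, hφ i1 hxi1 k hk1]
    · simp only [if_neg hi]
      exact hF i
  · intro hgx
    have hG : ∀ b, b ≠ t → andNotNet P N x b = x b := by
      intro b hb
      simpa [if_neg hb] using congrFun hgx b
    have hGt : (andNotNet P N x t && x k) = x t := by
      simpa using congrFun hgx t
    funext i
    by_cases hi : i = t
    · subst hi
      cases hxt : x i with
      | true =>
        rw [hxt, Bool.and_eq_true] at hGt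
        exact hGt.1
      | false =>
        cases hft : andNotNet P N x i with
        | false => rfl
        | true =>
          exfalso
          have hφt : ∀ j ∈ P i, x j = true := fun j hj =>
            (of_decide_eq_true hft).1 j hj
          have hφ : ∀ b, x b = true → ∀ j ∈ P b, x j = true := by
            intro b hb j hj
            by_cases hbt : b = i
            · subst hbt; rw [hb] at hxt; simp at hxt
            · exact (of_decide_eq_true ((hG b hbt).trans hb)).1 j hj
          have hxi1 : x i1 = true := reach_aux P x i hφ hφt i1 htg
          have hxk : x k = true := by
            by_cases h1t : i1 = i
            · subst h1t; exact absurd hk1 hkP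
            · exact (of_decide_eq_true ((hG i1 h1t).trans hxi1)).1 k hk1
          rw [hft, hxk, hxt] at hGt
          exact absurd hGt (by simp)
    · exact hG i hi
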